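/- Monotonicity and range of the profile function of the Carnot–Carathéodory distance on the Heisenberg group: define χ : [0,π) → ℝ by χ(0) = 0 and χ(φ) = φ/(sin φ)² − cot φ for φ ∈ (0,π). Then χ is continuous and strictly increasing on [0,π) and χ(φ) → +∞ as φ → π⁻; consequently, for every s ≥ 0 there is a unique φ ∈ [0,π) with χ(φ) = s. -/

import Mathlib

open Real Filter

/-- The profile function `χ(φ) = φ/(sin φ)² − cot φ` appearing in the explicit formula
for the Carnot–Carathéodory distance to the origin on the Heisenberg group.
(Note: with Lean's convention `x / 0 = 0`, this formula also gives `χ(0) = 0`.) -/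
noncomputable def chi (φ : ℝ) : ℝ := φ / Real.sin φ ^ 2 - Real.cos φ / Real.sin φ

lemma chi_zero : chi 0 = 0 := by simp [chi]

lemma mul_cos_lt_sin {φ : ℝ} (h0 : 0 < φ) (hπ : φ < π) : φ * Real.cos φ < Real.sin φ := by
  have hs : 0 < Real.sin φ := Real.sin_pos_of_pos_of_lt_pi h0 hπ
  rcases le_or_gt (Real.cos φ) 0 with h | h
  · nlinarith
  · have hφ2 : φ < π / 2 := by
      by_contra hc
      push_neg at hc
      have := Real.cos_nonpos_of_pi_div_two_le_of_le hc (by linarith [Real.pi_pos])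
      linarith
    have := Real.lt_tan h0 hφ2
    rw [Real.tan_eq_sin_div_cos, lt_div_iff₀ h] at this
    linarith

lemma chi_eq {φ : ℝ} (hs : Real.sin φ ≠ 0) :
    chi φ = (φ - Real.sin φ * Real.cos φ) / Real.sin φ ^ 2 := by
  unfold chi
  field_simp

lemma chi_hasDerivAt {φ : ℝ} (h0 : 0 < φ) (hπ : φ < π) :
    HasDerivAt chi (2 * (Real.sin φ - φ * Real.cos φ) / Real.sin φ ^ 3) φ := by
  have hs : Real.sin φ ≠ 0 := ne_of_gt (Real.sin_pos_of_pos_of_lt_pi h0 hπ)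
  have h1 : HasDerivAt (fun x : ℝ => x / Real.sin x ^ 2)
      ((1 * Real.sin φ ^ 2 - φ * (2 * Real.sin φ ^ 1 * Real.cos φ)) / (Real.sin φ ^ 2) ^ 2) φ :=
    (hasDerivAt_id φ).div ((Real.hasDerivAt_sin φ).pow 2) (pow_ne_zero 2 hs)
  have h2 : HasDerivAt (fun x : ℝ => Real.cos x / Real.sin x)
      ((-Real.sin φ * Real.sin φ - Real.cos φ * Real.cos φ) / Real.sin φ ^ 2) φ :=
    (Real.hasDerivAt_cos φ).div (Real.hasDerivAt_sin φ) hs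
  have := h1.sub h2
  refine this.congr_deriv ?_
  have hpyth := Real.sin_sq_add_cos_sq φ
  field_simp
  linear_combination (Real.sin φ) * hpyth

lemma chi_deriv_pos {φ : ℝ} (h0 : 0 < φ) (hπ : φ < π) : 0 < deriv chi φ := by
  rw [(chi_hasDerivAt h0 hπ).deriv]
  have hs : 0 < Real.sin φ := Real.sin_pos_of_pos_of_lt_pi h0 hπ
  have h := mul_cos_lt_sin h0 hπ
  apply div_pos (by nlinarith) (by positivity)

lemma chi_nonneg_le_tan {φ : ℝ} (h0 : 0 < φ) (hφ : φ < π / 2) :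
    0 ≤ chi φ ∧ chi φ ≤ Real.tan φ := by
  have hπ : φ < π := lt_trans hφ (by linarith [Real.pi_pos])
  have hs : 0 < Real.sin φ := Real.sin_pos_of_pos_of_lt_pi h0 hπ
  have hc : 0 < Real.cos φ := Real.cos_pos_of_mem_Ioo ⟨by linarith, hφ⟩
  have hsin_le : Real.sin φ ≤ φ := Real.sin_le h0.le
  have hcos_le : Real.cos φ ≤ 1 := Real.cos_le_one φ
  rw [chi_eq (ne_of_gt hs), Real.tan_eq_sin_div_cos]
  constructor
  · apply div_nonneg _ (sq_nonneg _)
    nlinarith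
  · rw [div_le_div_iff₀ (by positivity) hc]
    have := mul_cos_lt_sin h0 hπ
    nlinarith [Real.sin_sq_add_cos_sq φ]

lemma chi_continuousOn : ContinuousOn chi (Set.Ico 0 π) := by
  intro x hx
  rcases eq_or_lt_of_le hx.1 with h0 | h0
  · -- continuity at 0 via squeeze
    subst h0
    rw [ContinuousWithinAt, chi_zero]
    have htan : Tendsto Real.tan (nhdsWithin 0 (Set.Ico 0 π)) (nhds 0) := by
      have h : ContinuousAt Real.tan 0 := Real.continuousAt_tan.mpr (by simp)
      simpa using h.tendsto.mono_left nhdsWithin_le_nhds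
    have hmem : ∀ᶠ y in nhdsWithin 0 (Set.Ico 0 π), y ∈ Set.Ico 0 (π / 2) := by
      have h1 : Set.Iio (π / 2) ∈ nhdsWithin 0 (Set.Ico 0 π) :=
        nhdsWithin_le_nhds (Iio_mem_nhds (by linarith [Real.pi_pos]))
      filter_upwards [h1, self_mem_nhdsWithin] with y hy1 hy2
      exact ⟨hy2.1, hy1⟩
    apply tendsto_of_tendsto_of_tendsto_of_le_of_le' tendsto_const_nhds htan
    · filter_upwards [hmem] with y hy
      rcases eq_or_lt_of_le hy.1 with h | h
      · simp [← h, chi_zero]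
      · exact (chi_nonneg_le_tan h hy.2).1
    · filter_upwards [hmem] with y hy
      rcases eq_or_lt_of_le hy.1 with h | h
      · simp [← h, chi_zero]
      · exact (chi_nonneg_le_tan h hy.2).2
  · exact ((continuousAt_id.div ((Real.continuous_sin.continuousAt).pow 2)
      (pow_ne_zero 2 (ne_of_gt (Real.sin_pos_of_pos_of_lt_pi h0 hx.2)))).sub
      ((Real.continuous_cos.continuousAt).div (Real.continuous_sin.continuousAt)
      (ne_of_gt (Real.sin_pos_of_pos_of_lt_pi h0 hx.2)))).continuousWithinAt

lemma chi_strictMonoOn : StrictMonoOn chi (Set.Ico 0 π) := by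
  apply strictMonoOn_of_deriv_pos (convex_Ico 0 π) chi_continuousOn
  intro x hx
  rw [interior_Ico] at hx
  exact chi_deriv_pos hx.1 hx.2

lemma chi_tendsto_atTop : Tendsto chi (nhdsWithin π (Set.Iio π)) atTop := by
  have hmem : ∀ᶠ y in nhdsWithin π (Set.Iio π), y ∈ Set.Ioo 0 π := by
    have h1 : Set.Ioi (0:ℝ) ∈ nhdsWithin π (Set.Iio π) :=
      nhdsWithin_le_nhds (Ioi_mem_nhds Real.pi_pos)
    filter_upwards [h1, self_mem_nhdsWithin] with y hy1 hy2
    exact ⟨hy1, hy2⟩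
  have hnum : Tendsto (fun φ => φ - Real.sin φ * Real.cos φ) (nhdsWithin π (Set.Iio π)) (nhds π) := by
    have h : ContinuousAt (fun φ => φ - Real.sin φ * Real.cos φ) π :=
      continuousAt_id.sub (Real.continuous_sin.continuousAt.mul Real.continuous_cos.continuousAt)
    have := h.tendsto.mono_left (nhdsWithin_le_nhds (s := Set.Iio π))
    simpa using this
  have hden : Tendsto (fun φ => (Real.sin φ ^ 2)⁻¹) (nhdsWithin π (Set.Iio π)) atTop := by
    apply tendsto_inv_nhdsGT_zero.comp
    rw [tendsto_nhdsWithin_iff]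
    constructor
    · have h : ContinuousAt (fun φ => Real.sin φ ^ 2) π :=
        (Real.continuous_sin.continuousAt).pow 2
      have := h.tendsto.mono_left (nhdsWithin_le_nhds (s := Set.Iio π))
      simpa using this
    · filter_upwards [hmem] with y hy
      exact pow_pos (Real.sin_pos_of_pos_of_lt_pi hy.1 hy.2) 2
  have h := hnum.pos_mul_atTop Real.pi_pos hden
  apply h.congr'
  filter_upwards [hmem] with y hy
  rw [chi_eq (ne_of_gt (Real.sin_pos_of_pos_of_lt_pi hy.1 hy.2)), div_eq_mul_inv]

theorem chi_strictMono_surjective :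
    ContinuousOn chi (Set.Ico 0 π) ∧
    StrictMonoOn chi (Set.Ico 0 π) ∧
    Tendsto chi (nhdsWithin π (Set.Iio π)) atTop ∧
    (∀ s : ℝ, 0 ≤ s → ∃! φ : ℝ, φ ∈ Set.Ico 0 π ∧ chi φ = s) := by
  refine ⟨chi_continuousOn, chi_strictMonoOn, chi_tendsto_atTop, fun s hs => ?_⟩
  -- existence
  have hne : (nhdsWithin π (Set.Iio π)).NeBot := nhdsLT_neBot π
  have hev : ∀ᶠ y in nhdsWithin π (Set.Iio π), s < chi y ∧ y ∈ Set.Ioo 0 π := by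
    have h1 := chi_tendsto_atTop.eventually_gt_atTop s
    have h2 : Set.Ioi (0:ℝ) ∈ nhdsWithin π (Set.Iio π) :=
      nhdsWithin_le_nhds (Ioi_mem_nhds Real.pi_pos)
    filter_upwards [h1, h2, self_mem_nhdsWithin] with y hy1 hy2 hy3
    exact ⟨hy1, hy2, hy3⟩
  obtain ⟨φ₀, hφ₀s, hφ₀⟩ := hev.exists
  have hsub : Set.Icc (0:ℝ) φ₀ ⊆ Set.Ico 0 π := fun y hy => ⟨hy.1, lt_of_le_of_lt hy.2 hφ₀.2⟩
  have hivt := intermediate_value_Icc hφ₀.1.le (chi_continuousOn.mono hsub)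
  have hmem : s ∈ Set.Icc (chi 0) (chi φ₀) := ⟨by rw [chi_zero]; exact hs, hφ₀s.le⟩
  obtain ⟨φ, hφ, hval⟩ := hivt hmem
  refine ⟨φ, ⟨hsub hφ, hval⟩, ?_⟩
  rintro ψ ⟨hψ, hψval⟩
  exact chi_strictMonoOn.injOn hψ (hsub hφ) (by rw [hψval, hval])
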